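/- Let V: H → H' be an isometry, {M_a}_{a∈{0,1}ⁿ} a projective measurement on H, |ψ⟩ ∈ H a unit vector, |ψ'⟩ ∈ H' a unit vector, and {M'_a}_{a∈{0,1}ⁿ} a projective measurement on H'. For s ∈ {0,1}ⁿ define M^s = Σ_a (−1)^{a·s} M_a and M'^s = Σ_a (−1)^{a·s} M'_a. If ‖V M^s |ψ⟩ − M'^s |ψ'⟩‖ ≤ δ for all s ∈ {0,1}ⁿ, then Σ_{a∈{0,1}ⁿ} ‖V M_a |ψ⟩ − M'_a |ψ'⟩‖² ≤ δ². -/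

import Mathlib

/-- The number of positions at which both bit strings are `1` (so that
`(−1)^(dotCount a s)` is the sign `(−1)^{a·s}`). -/
def dotCount {n : ℕ} (a s : Fin n → Bool) : ℕ :=
  ∑ j, if a j && s j then 1 else 0

/-- The observable `M^s = Σ_a (−1)^{a·s} M_a`. -/
noncomputable def obsOf {n d : ℕ} (M : (Fin n → Bool) → Matrix (Fin d) (Fin d) ℂ)
    (s : Fin n → Bool) : Matrix (Fin d) (Fin d) ℂ :=
  ∑ a, ((-1 : ℂ) ^ dotCount a s) • M a

lemma sign_prod {n : ℕ} (a s : Fin n → Bool) :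
    ((-1 : ℂ) ^ dotCount a s) = ∏ j, (if a j && s j then (-1 : ℂ) else 1) := by
  rw [dotCount, ← Finset.prod_pow_eq_pow_sum]
  refine Finset.prod_congr rfl fun j _ => ?_
  by_cases h : a j && s j <;> simp [h]

lemma orth {n : ℕ} (a b : Fin n → Bool) :
    ∑ s : Fin n → Bool, ((-1 : ℂ) ^ dotCount a s * (-1 : ℂ) ^ dotCount b s)
      = if a = b then (2 : ℂ) ^ n else 0 := by
  have key : ∀ s : Fin n → Bool,
      ((-1 : ℂ) ^ dotCount a s * (-1 : ℂ) ^ dotCount b s)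
        = ∏ j, ((if a j && s j then (-1 : ℂ) else 1) * (if b j && s j then (-1 : ℂ) else 1)) := by
    intro s; rw [sign_prod, sign_prod, Finset.prod_mul_distrib]
  simp only [key]
  rw [← Fintype.prod_sum (fun j (x : Bool) =>
    ((if a j && x then (-1 : ℂ) else 1) * (if b j && x then (-1 : ℂ) else 1)))]
  have factor : ∀ j, (∑ x : Bool,
      ((if a j && x then (-1 : ℂ) else 1) * (if b j && x then (-1 : ℂ) else 1)))
        = if a j = b j then 2 else 0 := by
    intro j
    cases ha : a j <;> cases hb : b j <;> simp [Fintype.sum_bool] <;> ring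
  simp only [factor]
  by_cases hab : a = b
  · subst hab; simp
  · rw [if_neg hab]
    obtain ⟨j, hj⟩ : ∃ j, a j ≠ b j := Function.ne_iff.mp hab
    exact Finset.prod_eq_zero (Finset.mem_univ j) (if_neg hj)

/-- if `‖V M^s ψ − M'^s ψ'‖ ≤ δ` for all `s ∈ {0,1}ⁿ`, then
`Σ_a ‖V M_a ψ − M'_a ψ'‖² ≤ δ²`. -/
theorem sum_proj_dist_sq_le {n d d' : ℕ}
    (V : Matrix (Fin d') (Fin d) ℂ) (hV : V.conjTranspose * V = 1)
    (M : (Fin n → Bool) → Matrix (Fin d) (Fin d) ℂ)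
    (hMherm : ∀ a, (M a).IsHermitian) (hMproj : ∀ a, M a * M a = M a)
    (hMsum : ∑ a, M a = 1)
    (ψ : EuclideanSpace ℂ (Fin d)) (hψ : ‖ψ‖ = 1)
    (M' : (Fin n → Bool) → Matrix (Fin d') (Fin d') ℂ)
    (hM'herm : ∀ a, (M' a).IsHermitian) (hM'proj : ∀ a, M' a * M' a = M' a)
    (hM'sum : ∑ a, M' a = 1)
    (ψ' : EuclideanSpace ℂ (Fin d')) (hψ' : ‖ψ'‖ = 1)
    (δ : ℝ)
    (h : ∀ s : Fin n → Bool,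
      ‖Matrix.toEuclideanLin (V * obsOf M s) ψ - Matrix.toEuclideanLin (obsOf M' s) ψ'‖ ≤ δ) :
    ∑ a : Fin n → Bool,
        ‖Matrix.toEuclideanLin (V * M a) ψ - Matrix.toEuclideanLin (M' a) ψ'‖ ^ 2 ≤ δ ^ 2 := by
  set f : (Fin n → Bool) → EuclideanSpace ℂ (Fin d') := fun a =>
    Matrix.toEuclideanLin (V * M a) ψ - Matrix.toEuclideanLin (M' a) ψ' with hf
  set F : (Fin n → Bool) → EuclideanSpace ℂ (Fin d') := fun s =>
    Matrix.toEuclideanLin (V * obsOf M s) ψ - Matrix.toEuclideanLin (obsOf M' s) ψ' with hF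
  have hFsum : ∀ s, F s = ∑ a, ((-1 : ℂ) ^ dotCount a s) • f a := by
    intro s
    have h1 : V * obsOf M s = ∑ a, ((-1 : ℂ) ^ dotCount a s) • (V * M a) := by
      rw [obsOf, Matrix.mul_sum]
      exact Finset.sum_congr rfl fun a _ => Matrix.mul_smul _ _ _
    have h2 : obsOf M' s = ∑ a, ((-1 : ℂ) ^ dotCount a s) • M' a := rfl
    simp only [hF, h1, h2, map_sum, map_smul, LinearMap.sum_apply, LinearMap.smul_apply, hf]
    rw [← Finset.sum_sub_distrib]
    congr 1; ext a : 1; rw [smul_sub]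
  have conj_sign : ∀ (k : ℕ), (starRingEnd ℂ) ((-1 : ℂ) ^ k) = (-1 : ℂ) ^ k := by
    intro k; rw [map_pow, map_neg, map_one]
  have key : ∑ s : Fin n → Bool, (inner ℂ (F s) (F s) : ℂ)
      = ((2 : ℝ) ^ n) • ∑ a, (inner ℂ (f a) (f a) : ℂ) := by
    have inner_expand : ∀ s : Fin n → Bool,
        (inner ℂ (F s) (F s) : ℂ) = ∑ a, ∑ b, ((-1 : ℂ) ^ dotCount a s * (-1 : ℂ) ^ dotCount b s)
          * inner ℂ (f a) (f b) := by
      intro s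
      rw [hFsum s, sum_inner]
      refine Finset.sum_congr rfl fun a _ => ?_
      rw [inner_sum]
      refine Finset.sum_congr rfl fun b _ => ?_
      rw [inner_smul_left, inner_smul_right, ← mul_assoc, conj_sign]
    calc ∑ s : Fin n → Bool, (inner ℂ (F s) (F s) : ℂ)
        = ∑ s : Fin n → Bool, ∑ a, ∑ b,
            ((-1 : ℂ) ^ dotCount a s * (-1 : ℂ) ^ dotCount b s) * inner ℂ (f a) (f b) :=
          Finset.sum_congr rfl fun s _ => inner_expand s
      _ = ∑ a, ∑ b, (∑ s : Fin n → Bool,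
            ((-1 : ℂ) ^ dotCount a s * (-1 : ℂ) ^ dotCount b s)) * inner ℂ (f a) (f b) := by
          rw [Finset.sum_comm]
          refine Finset.sum_congr rfl fun a _ => ?_
          rw [Finset.sum_comm]
          refine Finset.sum_congr rfl fun b _ => ?_
          rw [Finset.sum_mul]
      _ = ∑ a, ∑ b, (if a = b then (2 : ℂ) ^ n else 0) * inner ℂ (f a) (f b) := by
          simp only [orth]
      _ = ∑ a, (2 : ℂ) ^ n * inner ℂ (f a) (f a) := by
          refine Finset.sum_congr rfl fun a _ => ?_
          rw [Finset.sum_eq_single a]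
          · rw [if_pos rfl]
          · intro b _ hb; rw [if_neg (Ne.symm hb), zero_mul]
          · intro hb; exact absurd (Finset.mem_univ a) hb
      _ = ((2 : ℝ) ^ n) • ∑ a, (inner ℂ (f a) (f a) : ℂ) := by
          rw [Finset.smul_sum]
          refine Finset.sum_congr rfl fun a _ => ?_
          rw [Complex.real_smul]
          push_cast
          ring
  have parseval_real : ∑ s : Fin n → Bool, ‖F s‖ ^ 2 = 2 ^ n * ∑ a, ‖f a‖ ^ 2 := by
    have h1 := congrArg (fun z : ℂ => RCLike.re z) key
    simpa only [map_sum, RCLike.smul_re, inner_self_eq_norm_sq, smul_eq_mul] using h1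
  have hδ0 : 0 ≤ δ := le_trans (norm_nonneg _) (h (fun _ => false))
  have hbound : ∑ s : Fin n → Bool, ‖F s‖ ^ 2 ≤ 2 ^ n * δ ^ 2 := by
    calc ∑ s : Fin n → Bool, ‖F s‖ ^ 2 ≤ ∑ s : Fin n → Bool, δ ^ 2 :=
          Finset.sum_le_sum fun s _ => pow_le_pow_left₀ (norm_nonneg _) (h s) 2
      _ = 2 ^ n * δ ^ 2 := by
          rw [Finset.sum_const, Finset.card_univ, Fintype.card_fun]
          simp [mul_comm]
  have h2n : (0 : ℝ) < 2 ^ n := by positivity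
  nlinarith [parseval_real, hbound]
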